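/- Monotone decrease of the training direction (Remark A.1, monotonicity part): If K : Matrix (Fin n) (Fin n) ℝ is positive semidefinite (K.PosSemidef), then for every v : Fin n → ℝ the function t ↦ ‖(exp (−t • K)).mulVec v‖ (Euclidean norm) is antitone on the set [0, ∞) (Set.Ici 0); i.e., the norm of the residual f t − Y, and hence of the training direction, never increases along kernel gradient flow. -/

import Mathlib

/-- The matrix exponential (`Matrix.exp` in later Mathlib): the exponential in the
topological algebra of square matrices. -/
noncomputable def Matrix.exp (𝕂 : Type*) {n : ℕ} [Field 𝕂] [TopologicalSpace 𝕂]
    [IsTopologicalRing 𝕂] (A : Matrix (Fin n) (Fin n) 𝕂) : Matrix (Fin n) (Fin n) 𝕂 :=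
  NormedSpace.exp A

open Matrix

/-- The Euclidean (`ℓ²`) norm of a vector in `Fin n → ℝ`. -/
noncomputable def euclNorm {n : ℕ} (v : Fin n → ℝ) : ℝ :=
  ‖(WithLp.equiv 2 (Fin n → ℝ)).symm v‖

attribute [local instance] Matrix.linftyOpNormedRing Matrix.linftyOpNormedAlgebra

private lemma inner_symm_eq_dot {n : ℕ} (a b : Fin n → ℝ) :
    (inner ℝ ((WithLp.equiv 2 (Fin n → ℝ)).symm a) ((WithLp.equiv 2 (Fin n → ℝ)).symm b) : ℝ)
      = dotProduct a b := by
  simp only [PiLp.inner_apply, RCLike.inner_apply, conj_trivial, dotProduct]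
  exact Finset.sum_congr rfl fun i _ => mul_comm _ _

/-- Monotone decrease of the training direction (Remark A.1, monotonicity part):
for positive semidefinite `K`, the Euclidean norm of the residual
`exp (−t • K) v` is antitone on `[0, ∞)`. -/
theorem residual_norm_antitone (n : ℕ) (K : Matrix (Fin n) (Fin n) ℝ)
    (hK : K.PosSemidef) (v : Fin n → ℝ) :
    AntitoneOn (fun t : ℝ => euclNorm ((Matrix.exp ℝ (-t • K)).mulVec v)) (Set.Ici 0) := by
  classical
  -- the residual as a curve in Euclidean space
  set F : ℝ → EuclideanSpace ℝ (Fin n) := fun t =>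
    (WithLp.equiv 2 (Fin n → ℝ)).symm ((NormedSpace.exp (-t • K)).mulVec v) with hF
  -- the linear map `M ↦ M.mulVec v` into Euclidean space
  let L : Matrix (Fin n) (Fin n) ℝ →ₗ[ℝ] EuclideanSpace ℝ (Fin n) :=
    { toFun := fun M => (WithLp.equiv 2 (Fin n → ℝ)).symm (M.mulVec v)
      map_add' := fun A B => by simp [Matrix.add_mulVec]
      map_smul' := fun c A => by simp [Matrix.smul_mulVec] }
  have hFd : ∀ t : ℝ, HasDerivAt F
      (-(WithLp.equiv 2 (Fin n → ℝ)).symm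
        (K.mulVec ((NormedSpace.exp (-t • K)).mulVec v))) t := by
    intro t
    have h1 : HasDerivAt (fun u : ℝ => NormedSpace.exp (u • K))
        (NormedSpace.exp ((-t) • K) * K) (-t) := hasDerivAt_exp_smul_const K (-t)
    have hneg : HasDerivAt (fun u : ℝ => -u) (-1 : ℝ) t := (hasDerivAt_id t).neg
    have h2 : HasDerivAt (fun u : ℝ => NormedSpace.exp (-u • K))
        ((-1 : ℝ) • (NormedSpace.exp ((-t) • K) * K)) t := h1.scomp t hneg
    have h3 := (L.toContinuousLinearMap.hasFDerivAt.comp_hasDerivAt t h2)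
    have hcomm : NormedSpace.exp ((-t) • K) * K = K * NormedSpace.exp ((-t) • K) :=
      (((Commute.refl K).smul_left (-t)).exp_left).eq
    convert h3 using 1
    show -(WithLp.equiv 2 (Fin n → ℝ)).symm _ = L ((-1 : ℝ) • (NormedSpace.exp ((-t) • K) * K))
    rw [_root_.map_smul]
    show -(WithLp.equiv 2 (Fin n → ℝ)).symm _
        = (-1 : ℝ) • (WithLp.equiv 2 (Fin n → ℝ)).symm ((NormedSpace.exp ((-t) • K) * K).mulVec v)
    rw [hcomm, neg_one_smul, Matrix.mulVec_mulVec]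
    all_goals rfl
  -- the squared norm
  set g : ℝ → ℝ := fun t => inner ℝ (F t) (F t) with hg
  have hgd : ∀ t : ℝ, HasDerivAt g
      (inner ℝ (F t) (-(WithLp.equiv 2 (Fin n → ℝ)).symm
          (K.mulVec ((NormedSpace.exp (-t • K)).mulVec v))) +
        inner ℝ (-(WithLp.equiv 2 (Fin n → ℝ)).symm
          (K.mulVec ((NormedSpace.exp (-t • K)).mulVec v))) (F t)) t := fun t =>
    (hFd t).inner ℝ (hFd t)
  have hderiv_nonpos : ∀ t : ℝ, deriv g t ≤ 0 := by
    intro t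
    rw [(hgd t).deriv]
    set w : Fin n → ℝ := (NormedSpace.exp (-t • K)).mulVec v with hw
    have hquad : 0 ≤ dotProduct w (K.mulVec w) := by
      simpa using hK.dotProduct_mulVec_nonneg w
    have hFt : F t = (WithLp.equiv 2 (Fin n → ℝ)).symm w := rfl
    rw [hFt, inner_neg_left, inner_neg_right, inner_symm_eq_dot, inner_symm_eq_dot]
    have h1 : dotProduct (K.mulVec w) w = dotProduct w (K.mulVec w) :=
      dotProduct_comm _ _
    rw [h1]
    linarith
  have hganti : AntitoneOn g (Set.Ici (0 : ℝ)) := by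
    refine antitoneOn_of_deriv_nonpos (convex_Ici 0) ?_ ?_ ?_
    · exact fun t _ => ((hgd t).continuousAt).continuousWithinAt
    · exact fun t _ => (hgd t).differentiableAt.differentiableWithinAt
    · exact fun t _ => hderiv_nonpos t
  intro s hs t ht hst
  have h2 : g t ≤ g s := hganti hs ht hst
  have hnorm : ∀ u : ℝ, euclNorm ((Matrix.exp ℝ (-u • K)).mulVec v) = Real.sqrt (g u) := by
    intro u
    show ‖F u‖ = Real.sqrt (g u)
    have : g u = inner ℝ (F u) (F u) := rfl
    rw [this, real_inner_self_eq_norm_sq, Real.sqrt_sq (norm_nonneg _)]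
  simp only [hnorm]
  exact Real.sqrt_le_sqrt h2
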